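/- Let A be an n×n symmetric random matrix with the entries {A_{ij}}_{i≤j} i.i.d. from a continuous distribution, n ≥ 6. For distinct indices i, j, k, the probability that all three diagonal entries A_{ii}, A_{jj}, A_{kk} are simultaneously dominating (A_{ll} > A_{lm} for all m ≠ l, for l ∈ {i,j,k}) is at most 1/(n−3)³. -/

import Mathlib

open MeasureTheory ProbabilityTheory

section aux

lemma minmax_pair_eq {α : Type*} [LinearOrder α] {a b c d : α}
    (h1 : min a b = min c d) (h2 : max a b = max c d) :
    (a = c ∧ b = d) ∨ (a = d ∧ b = c) := by
  rcases le_total a b with hab | hab <;> rcases le_total c d with hcd | hcd <;>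
    simp [min_def, max_def, hab, hcd] at h1 h2 <;> tauto

lemma iIndepFun_precomp {Ω ι ι' β : Type*} {mΩ : MeasurableSpace Ω} {μ : Measure Ω}
    [mβ : MeasurableSpace β] {f : ι → Ω → β}
    (hf : iIndepFun f μ) {u : ι' → ι} (hu : Function.Injective u) :
    iIndepFun (fun i' => f (u i')) μ := by
  classical
  rw [iIndepFun_iff_measure_inter_preimage_eq_mul] at hf ⊢
  intro S sets hsets
  set sets' : ι → Set β := fun i =>
    if h : ∃ i' ∈ S, u i' = i then sets h.choose else Set.univ with hsets'def
  have key : ∀ i₀ ∈ S, sets' (u i₀) = sets i₀ := by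
    intro i₀ h₀
    have h : ∃ i' ∈ S, u i' = u i₀ := ⟨i₀, h₀, rfl⟩
    simp only [hsets'def, dif_pos h]
    exact congrArg sets (hu h.choose_spec.2)
  have h1 : (⋂ i' ∈ S, f (u i') ⁻¹' sets i') = ⋂ i ∈ S.image u, f i ⁻¹' sets' i := by
    ext ω
    simp only [Set.mem_iInter, Finset.mem_image]
    constructor
    · rintro h i ⟨i', hi', rfl⟩
      rw [key i' hi']; exact h i' hi'
    · intro h i' hi'
      rw [← key i' hi']; exact h (u i') ⟨i', hi', rfl⟩
  have h2 := hf (S.image u) (sets := sets') (by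
    rintro i hi
    rcases Finset.mem_image.1 hi with ⟨i', hi', rfl⟩
    rw [key i' hi']; exact hsets i' hi')
  rw [h1, h2, Finset.prod_image (fun a _ b _ hab => hu hab)]
  exact Finset.prod_congr rfl fun i' hi' => by rw [key i' hi']

lemma prob_strict_max_le {ι : Type*} [Fintype ι] {Ω : Type*} [MeasureSpace Ω]
    [IsProbabilityMeasure (ℙ : Measure Ω)]
    (g : ι → Ω → ℝ) (hmeas : ∀ c, Measurable (g c)) (μ : Measure ℝ) [IsProbabilityMeasure μ]
    (hdist : ∀ c, Measure.map (g c) ℙ = μ)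
    (hind : iIndepFun g ℙ) (a : ι) :
    ℙ {ω | ∀ b, b ≠ a → g b ω < g a ω} ≤ ((Fintype.card ι : ENNReal))⁻¹ := by
  classical
  set Y : Ω → (ι → ℝ) := fun ω c => g c ω with hYdef
  have hYmeas : Measurable Y := measurable_pi_iff.2 hmeas
  set π : Measure (ι → ℝ) := Measure.pi (fun _ => μ) with hπdef
  have hY : Measure.map Y ℙ = π := by
    symm
    apply Measure.pi_eq
    intro s hs
    rw [Measure.map_apply hYmeas (MeasurableSet.univ_pi hs)]
    have : Y ⁻¹' Set.univ.pi s = ⋂ c, g c ⁻¹' s c := by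
      ext ω; simp [Y, Set.mem_pi]
    rw [this, hind.meas_iInter fun c => ⟨s c, hs c, rfl⟩]
    refine Finset.prod_congr rfl fun c _ => ?_
    rw [← hdist c, Measure.map_apply (hmeas c) (hs c)]
  set A : ι → Set (ι → ℝ) := fun c => {v | ∀ b, b ≠ c → v b < v c} with hAdef
  have hAmeas : ∀ c, MeasurableSet (A c) := by
    intro c
    have : A c = ⋂ b ∈ ({c}ᶜ : Set ι), {v : ι → ℝ | v b < v c} := by
      ext v; simp [A]
    rw [this]
    exact MeasurableSet.biInter (Set.to_countable _) fun b _ =>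
      measurableSet_lt (measurable_pi_apply b) (measurable_pi_apply c)
  have hpre : {ω | ∀ b, b ≠ a → g b ω < g a ω} = Y ⁻¹' A a := rfl
  rw [hpre, ← Measure.map_apply hYmeas (hAmeas a), hY]
  have hswap : ∀ c, π (A c) = π (A a) := by
    intro c
    set e : ι ≃ ι := Equiv.swap a c with hedef
    have hmp : MeasurePreserving (MeasurableEquiv.piCongrLeft (fun _ : ι => ℝ) e)
        π π := measurePreserving_piCongrLeft (fun _ => μ) e
    have hcoe : ∀ (v : ι → ℝ) (b : ι),
        (MeasurableEquiv.piCongrLeft (fun _ : ι => ℝ) e) v b = v (e.symm b) := by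
      intro v b
      have := MeasurableEquiv.piCongrLeft_apply_apply e (β := fun _ : ι => ℝ) v (e.symm b)
      simpa using this
    have hprei : (MeasurableEquiv.piCongrLeft (fun _ : ι => ℝ) e) ⁻¹' A a = A c := by
      ext v
      simp only [Set.mem_preimage, hAdef, Set.mem_setOf_eq, hcoe]
      constructor
      · intro h b hb
        have := h (e b) (by
          intro hc
          apply hb
          have : e.symm (e b) = e.symm a := by rw [hc]
          simpa [hedef] using this)
        simpa [hedef] using this
      · intro h b hb
        have hb' : e.symm b ≠ c := by
          intro hc
          apply hb
          have : e (e.symm b) = e c := by rw [hc]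
          simpa [hedef] using this
        have := h (e.symm b) hb'
        simpa [hedef] using this
    calc π (A c) = π ((MeasurableEquiv.piCongrLeft (fun _ : ι => ℝ) e) ⁻¹' A a) := by
          rw [hprei]
      _ = π (A a) := hmp.measure_preimage (hAmeas a).nullMeasurableSet
  have hdisj : Pairwise (Function.onFun Disjoint A) := by
    intro b c hbc
    refine Set.disjoint_left.2 fun v hvb hvc => ?_
    exact absurd ((hvb c hbc.symm).trans (hvc b hbc)) (lt_irrefl _)
  have hsum : ∑ c : ι, π (A c) = π (⋃ c, A c) := by
    rw [measure_iUnion hdisj hAmeas, tsum_fintype]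
  have hle1 : ∑ c : ι, π (A c) ≤ 1 := hsum.le.trans (prob_le_one)
  have hcard : (Fintype.card ι : ENNReal) * π (A a) ≤ 1 := by
    calc (Fintype.card ι : ENNReal) * π (A a) = ∑ _c : ι, π (A a) := by
          simp [Finset.sum_const, Finset.card_univ, mul_comm]
      _ = ∑ c : ι, π (A c) := Finset.sum_congr rfl fun c _ => (hswap c).symm
      _ ≤ 1 := hle1
  rw [ENNReal.le_inv_iff_mul_le, mul_comm]
  exact hcard

end aux

/-- for a random symmetric `n×n` matrix (`n ≥ 6`) with i.i.d. atomless
upper-triangular entries, and distinct indices `i, j, k`, the probability that the three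
diagonal entries `A_{ii}, A_{jj}, A_{kk}` are simultaneously dominating is at most
`1/(n−3)³`. -/
theorem prob_three_diag_dominating {n : ℕ} (hn : 6 ≤ n)
    {Ω : Type*} [MeasureSpace Ω] [IsProbabilityMeasure (ℙ : Measure Ω)]
    (X : Fin n → Fin n → Ω → ℝ)
    (hXsym : ∀ i j, X i j = X j i)
    (hXmeas : ∀ i j, Measurable (X i j))
    (μ : Measure ℝ) [IsProbabilityMeasure μ]
    (hatomless : ∀ r : ℝ, μ {r} = 0)
    (hdist : ∀ i j : Fin n, i ≤ j → Measure.map (X i j) ℙ = μ)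
    (hindep : iIndepFun
      (fun p : {p : Fin n × Fin n // p.1 ≤ p.2} => X p.1.1 p.1.2) ℙ)
    (i j k : Fin n) (hij : i ≠ j) (hjk : j ≠ k) (hik : i ≠ k) :
    ℙ {ω | (∀ m, m ≠ i → X i m ω < X i i ω) ∧ (∀ m, m ≠ j → X j m ω < X j j ω) ∧
        (∀ m, m ≠ k → X k m ω < X k k ω)} ≤ (((n - 3 : ℕ) : ENNReal))⁻¹ ^ 3 := by
  classical
  set S := {p : Fin n × Fin n // p.1 ≤ p.2} with hSdef
  set f : S → Ω → ℝ := fun p => X p.1.1 p.1.2 with hfdef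
  have hfmeas : ∀ p : S, Measurable (f p) := fun p => hXmeas _ _
  set T3 : Finset (Fin n) := {i, j, k} with hT3def
  set Tsub := {t : Fin n // t ∉ T3} with hTsubdef
  -- X applied to sorted pair
  have hXmm : ∀ l t : Fin n, X (min l t) (max l t) = X l t := by
    intro l t
    rcases le_total l t with h | h
    · rw [min_eq_left h, max_eq_right h]
    · rw [min_eq_right h, max_eq_left h, hXsym]
  -- the coordinate maps
  set u : Fin n → Option Tsub → S := fun l c =>
    match c with
    | none => ⟨(l, l), le_rfl⟩
    | some t => ⟨(min l t.1, max l t.1), min_le_max⟩ with hudef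
  have hu_inj : ∀ l : Fin n, l ∈ T3 → Function.Injective (u l) := by
    intro l hl c c' hcc
    match c, c' with
    | none, none => rfl
    | none, some t =>
      exfalso
      have h1 : (l, l) = ((min l t.1, max l t.1) : Fin n × Fin n) := congrArg Subtype.val hcc
      have hmin : min l t.1 = l := (congrArg Prod.fst h1).symm
      have hmax : max l t.1 = l := (congrArg Prod.snd h1).symm
      have : t.1 = l := le_antisymm (hmax ▸ le_max_right l t.1) (hmin ▸ min_le_right l t.1)
      exact t.2 (this ▸ hl)
    | some t, none =>
      exfalso
      have h1 : ((min l t.1, max l t.1) : Fin n × Fin n) = (l, l) := congrArg Subtype.val hcc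
      have hmin : min l t.1 = l := congrArg Prod.fst h1
      have hmax : max l t.1 = l := congrArg Prod.snd h1
      have : t.1 = l := le_antisymm (hmax ▸ le_max_right l t.1) (hmin ▸ min_le_right l t.1)
      exact t.2 (this ▸ hl)
    | some t, some s =>
      have h1 := congrArg Subtype.val hcc
      have hmin : min l t.1 = min l s.1 := congrArg Prod.fst h1
      have hmax : max l t.1 = max l s.1 := congrArg Prod.snd h1
      rcases minmax_pair_eq hmin hmax with ⟨_, h⟩ | ⟨h, _⟩
      · exact congrArg some (Subtype.ext h)
      · exact absurd (by rw [← h]; exact hl : (s.1 : Fin n) ∈ T3) s.2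
  -- the three events
  set E : Fin n → Set Ω := fun l =>
    {ω | ∀ b : Option Tsub, b ≠ none → f (u l b) ω < f (u l none) ω} with hEdef
  -- core bound
  have hEbound : ∀ l : Fin n, l ∈ T3 → ℙ (E l) ≤ (((n - 3 : ℕ) : ENNReal))⁻¹ := by
    intro l hl
    have hcard3 : T3.card = 3 := by
      rw [hT3def, Finset.card_insert_of_notMem (by simp [hij, hik]),
        Finset.card_insert_of_notMem (by simp [hjk]), Finset.card_singleton]
    have hcardT : Fintype.card Tsub = n - 3 := by
      have h1 : Fintype.card Tsub = Fintype.card (Fin n) - Fintype.card {t : Fin n // t ∈ T3} :=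
        Fintype.card_subtype_compl _
      rw [h1, Fintype.card_coe, Fintype.card_fin, hcard3]
    have hb := prob_strict_max_le (fun c => f (u l c)) (fun c => hfmeas _) μ
      (fun c => hdist _ _ (u l c).2) (iIndepFun_precomp hindep (hu_inj l hl)) none
    have hcardO : (Fintype.card (Option Tsub) : ENNReal) = ((n - 3 : ℕ) : ENNReal) + 1 := by
      rw [Fintype.card_option, hcardT]
      push_cast
      ring
    refine le_trans hb ?_
    rw [hcardO]
    exact ENNReal.inv_le_inv' le_self_add
  -- event inclusion
  have hincl : {ω | (∀ m, m ≠ i → X i m ω < X i i ω) ∧ (∀ m, m ≠ j → X j m ω < X j j ω) ∧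
      (∀ m, m ≠ k → X k m ω < X k k ω)} ⊆ E i ∩ (E j ∩ E k) := by
    intro ω hω
    have key : ∀ l : Fin n, l ∈ T3 → (∀ m, m ≠ l → X l m ω < X l l ω) → ω ∈ E l := by
      intro l hl h b hb
      match b with
      | some t =>
        have ht : t.1 ≠ l := fun he => t.2 (he ▸ hl)
        have : f (u l (some t)) ω = X l t.1 ω := by
          simp only [hudef, hfdef]
          rw [hXmm]
        rw [this]
        exact h t.1 ht
    exact ⟨key i (by simp [hT3def]) hω.1,
      key j (by simp [hT3def]) hω.2.1, key k (by simp [hT3def]) hω.2.2⟩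
  -- finsets of coordinates
  set C : Fin n → Finset S := fun l => Finset.univ.image (u l) with hCdef
  have hmemC : ∀ l c, u l c ∈ C l := fun l c => Finset.mem_image_of_mem _ (Finset.mem_univ c)
  have hCdisj : ∀ l m : Fin n, l ∈ T3 → m ∈ T3 → l ≠ m → Disjoint (C l) (C m) := by
    intro l m hl hm hlm
    rw [Finset.disjoint_left]
    rintro p hp hq
    rcases Finset.mem_image.1 hp with ⟨c, _, rfl⟩
    rcases Finset.mem_image.1 hq with ⟨c', _, hcc⟩
    have h1 := congrArg Subtype.val hcc
    match c, c' with
    | none, none =>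
      exact hlm (congrArg Prod.fst h1).symm
    | some t, none =>
      have hmin : min l t.1 = m := (congrArg Prod.fst h1).symm
      have hmax : max l t.1 = m := (congrArg Prod.snd h1).symm
      have : l = m := le_antisymm (hmax ▸ le_max_left l t.1) (hmin ▸ min_le_left l t.1)
      exact hlm this
    | none, some s =>
      have hmin : min m s.1 = l := congrArg Prod.fst h1
      have hmax : max m s.1 = l := congrArg Prod.snd h1
      have : m = l := le_antisymm (hmax ▸ le_max_left m s.1) (hmin ▸ min_le_left m s.1)
      exact hlm this.symm
    | some t, some s =>
      have hmin : min m s.1 = min l t.1 := congrArg Prod.fst h1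
      have hmax : max m s.1 = max l t.1 := congrArg Prod.snd h1
      rcases minmax_pair_eq hmin hmax with ⟨h, _⟩ | ⟨_, h⟩
      · exact hlm h.symm
      · exact s.2 (by rw [h]; exact hl)
  -- expressing E l as a preimage over a finset of coordinates
  have hpre : ∀ (l : Fin n) (Cs : Finset S) (hmem : ∀ c, u l c ∈ Cs),
      ∃ B : Set (↥Cs → ℝ), MeasurableSet B ∧
        (fun ω (c : Cs) => f c ω) ⁻¹' B = E l := by
    intro l Cs hmem
    refine ⟨{v | ∀ b : Option Tsub, b ≠ none → v ⟨u l b, hmem b⟩ < v ⟨u l none, hmem none⟩},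
      ?_, rfl⟩
    have : {v : ↥Cs → ℝ | ∀ b : Option Tsub, b ≠ none →
        v ⟨u l b, hmem b⟩ < v ⟨u l none, hmem none⟩}
        = ⋂ (b : Option Tsub) (_ : b ≠ none),
          {v : ↥Cs → ℝ | v ⟨u l b, hmem b⟩ < v ⟨u l none, hmem none⟩} := by
      ext v; simp
    rw [this]
    exact MeasurableSet.iInter fun b => MeasurableSet.iInter fun _ =>
      measurableSet_lt (measurable_pi_apply _) (measurable_pi_apply _)
  -- independence factorization
  have hfactor : ℙ (E i ∩ (E j ∩ E k)) = ℙ (E i) * (ℙ (E j) * ℙ (E k)) := by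
    have hmemjk : ∀ c, u j c ∈ C j ∪ C k := fun c => Finset.mem_union_left _ (hmemC j c)
    have hmemkj : ∀ c, u k c ∈ C j ∪ C k := fun c => Finset.mem_union_right _ (hmemC k c)
    obtain ⟨Bi, hBi, hBipre⟩ := hpre i (C i) (hmemC i)
    obtain ⟨Bj, hBj, hBjpre⟩ := hpre j (C j) (hmemC j)
    obtain ⟨Bk, hBk, hBkpre⟩ := hpre k (C k) (hmemC k)
    obtain ⟨Bj', hBj', hBj'pre⟩ := hpre j (C j ∪ C k) hmemjk
    obtain ⟨Bk', hBk', hBk'pre⟩ := hpre k (C j ∪ C k) hmemkj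
    have hdisj1 : Disjoint (C i) (C j ∪ C k) := by
      rw [Finset.disjoint_union_right]
      exact ⟨hCdisj i j (by simp [hT3def]) (by simp [hT3def]) hij,
        hCdisj i k (by simp [hT3def]) (by simp [hT3def]) hik⟩
    have hdisj2 : Disjoint (C j) (C k) :=
      hCdisj j k (by simp [hT3def]) (by simp [hT3def]) hjk
    have hInd1 := hindep.indepFun_finset (C i) (C j ∪ C k) hdisj1 hfmeas
    have hInd2 := hindep.indepFun_finset (C j) (C k) hdisj2 hfmeas
    have step1 : ℙ (E i ∩ (E j ∩ E k)) = ℙ (E i) * ℙ (E j ∩ E k) := by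
      have h1 : E j ∩ E k = (fun ω (c : (C j ∪ C k : Finset S)) => f c ω) ⁻¹' (Bj' ∩ Bk') := by
        rw [Set.preimage_inter, hBj'pre, hBk'pre]
      have := hInd1.measure_inter_preimage_eq_mul Bi (Bj' ∩ Bk') hBi (hBj'.inter hBk')
      rw [hBipre] at this
      rw [h1, this, ← h1]
    have step2 : ℙ (E j ∩ E k) = ℙ (E j) * ℙ (E k) := by
      have := hInd2.measure_inter_preimage_eq_mul Bj Bk hBj hBk
      rwa [hBjpre, hBkpre] at this
    rw [step1, step2]
  calc ℙ {ω | (∀ m, m ≠ i → X i m ω < X i i ω) ∧ (∀ m, m ≠ j → X j m ω < X j j ω) ∧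
        (∀ m, m ≠ k → X k m ω < X k k ω)} ≤ ℙ (E i ∩ (E j ∩ E k)) := measure_mono hincl
    _ = ℙ (E i) * (ℙ (E j) * ℙ (E k)) := hfactor
    _ ≤ (((n - 3 : ℕ) : ENNReal))⁻¹ * ((((n - 3 : ℕ) : ENNReal))⁻¹ *
          (((n - 3 : ℕ) : ENNReal))⁻¹) := by
        exact mul_le_mul' (hEbound i (by simp [hT3def]))
          (mul_le_mul' (hEbound j (by simp [hT3def])) (hEbound k (by simp [hT3def])))
    _ = (((n - 3 : ℕ) : ENNReal))⁻¹ ^ 3 := by ring
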